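/- For a poset L, the following are equivalent: (1) L is continuous; (2) L has one-step closure and is exact; (3) A' is a lower set for every A ⊆ L and L is exact; (4) D' is a lower set for every directed subset D of L and L is exact. -/

import Mathlib

open Set

section OrderDefs

variable {L : Type*} [Preorder L]

/-- Downward closure `↓A`. -/
def dw (A : Set L) : Set L := {x | ∃ a ∈ A, x ≤ a}

/-- Upward closure `↑A`. -/
def up (A : Set L) : Set L := {x | ∃ a ∈ A, a ≤ x}

/-- Scott closure of a set. -/
def scottCl (A : Set L) : Set L := @closure L (Topology.scott L Set.univ) A

/-- `A' = {x : ∃ directed D ⊆ ↓A with x = sup D}`. -/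
def oneStep (A : Set L) : Set L :=
  {x | ∃ D : Set L, D ⊆ dw A ∧ D.Nonempty ∧ DirectedOn (· ≤ ·) D ∧ IsLUB D x}

/-- `A'' = {x : ∃ directed D ⊆ ↓A with x ≤ sup D}`. -/
def weakOneStep (A : Set L) : Set L :=
  {x | ∃ D : Set L, D ⊆ dw A ∧ D.Nonempty ∧ DirectedOn (· ≤ ·) D ∧ ∃ y, IsLUB D y ∧ x ≤ y}

/-- A poset has one-step closure if `cl(A) = A'` for all `A`. -/
def HasOneStepClosure (L : Type*) [Preorder L] : Prop :=
  ∀ A : Set L, scottCl A = oneStep A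

/-- A poset has weak one-step closure if `cl(A) = A''` for all `A`. -/
def HasWeakOneStepClosure (L : Type*) [Preorder L] : Prop :=
  ∀ A : Set L, scottCl A = weakOneStep A

/-- Meet continuity: `x ≤ sup D` implies `x ∈ cl(↓D ∩ ↓x)`. -/
def MeetContinuous (L : Type*) [Preorder L] : Prop :=
  ∀ x : L, ∀ D : Set L, D.Nonempty → DirectedOn (· ≤ ·) D → ∀ s, IsLUB D s → x ≤ s →
    x ∈ scottCl (dw D ∩ dw ({x} : Set L))

/-- The way-below relation `x ≪ y`. -/
def wayBelow (x y : L) : Prop :=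
  ∀ D : Set L, D.Nonempty → DirectedOn (· ≤ ·) D → ∀ s, IsLUB D s → y ≤ s →
    (D ∩ up ({x} : Set L)).Nonempty

/-- The weakly way-below relation `x ≪_w y`. -/
def weaklyWayBelow (x y : L) : Prop :=
  ∀ D : Set L, D.Nonempty → DirectedOn (· ≤ ·) D → IsLUB D y →
    (D ∩ up ({x} : Set L)).Nonempty

/-- A continuous poset: each `⇓x` is directed with supremum `x`. -/
def ContinuousPoset (L : Type*) [Preorder L] : Prop :=
  ∀ x : L, {y | wayBelow y x}.Nonempty ∧ DirectedOn (· ≤ ·) {y | wayBelow y x} ∧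
    IsLUB {y | wayBelow y x} x

/-- An exact poset: each `⇓_w x` is directed with supremum `x`. -/
def ExactPoset (L : Type*) [Preorder L] : Prop :=
  ∀ x : L, {y | weaklyWayBelow y x}.Nonempty ∧ DirectedOn (· ≤ ·) {y | weaklyWayBelow y x} ∧
    IsLUB {y | weaklyWayBelow y x} x

/-- `F ≪ x` for a set `F`: every directed `D` with `sup D ≥ x` meets `↑F`. -/
def finWayBelow (F : Set L) (x : L) : Prop :=
  ∀ D : Set L, D.Nonempty → DirectedOn (· ≤ ·) D → ∀ s, IsLUB D s → x ≤ s →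
    (D ∩ up F).Nonempty

/-- A quasicontinuous poset: each `fin(x)` is a directed family (Smyth preorder)
with `↑x = ⋂_{F ∈ fin(x)} ↑F`. -/
def QuasicontinuousPoset (L : Type*) [Preorder L] : Prop :=
  ∀ x : L, {F : Set L | F.Finite ∧ finWayBelow F x}.Nonempty ∧
    DirectedOn (fun F G => up G ⊆ up F) {F : Set L | F.Finite ∧ finWayBelow F x} ∧
    up ({x} : Set L) = ⋂ F ∈ {F : Set L | F.Finite ∧ finWayBelow F x}, up F

/-- A dcpo: every (nonempty) directed subset has a least upper bound. -/
def IsDcpo (L : Type*) [Preorder L] : Prop :=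
  ∀ D : Set L, D.Nonempty → DirectedOn (· ≤ ·) D → ∃ x, IsLUB D x

end OrderDefs


section AuxLemmas
variable {L : Type*} [Preorder L] {x y z : L} {A S : Set L}

lemma subset_dw (A : Set L) : A ⊆ dw A := fun a ha => ⟨a, ha, le_rfl⟩

lemma isLowerSet_dw (A : Set L) : IsLowerSet (dw A) :=
  fun _ b hba ⟨c, hc, hac⟩ => ⟨c, hc, hba.trans hac⟩

lemma mem_up_singleton : x ∈ up ({y} : Set L) ↔ y ≤ x :=
  ⟨fun ⟨a, ha, h⟩ => (mem_singleton_iff.1 ha ▸ h), fun h => ⟨y, rfl, h⟩⟩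

lemma scottClosed_iff : @IsClosed L (Topology.scott L univ) S ↔ IsLowerSet S ∧ DirSupClosed S := by
  letI := Topology.scott L univ
  haveI : Topology.IsScott L univ := ⟨rfl⟩
  exact Topology.IsScott.isClosed_iff_isLowerSet_and_dirSupClosed

lemma subset_scottCl (A : Set L) : A ⊆ scottCl A := by
  letI := Topology.scott L univ; exact subset_closure

lemma scottCl_isClosed (A : Set L) : @IsClosed L (Topology.scott L univ) (scottCl A) := by
  letI := Topology.scott L univ; exact isClosed_closure

lemma scottCl_isLowerSet (A : Set L) : IsLowerSet (scottCl A) :=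
  (scottClosed_iff.1 (scottCl_isClosed A)).1

lemma scottCl_dirSupClosed (A : Set L) : DirSupClosed (scottCl A) :=
  (scottClosed_iff.1 (scottCl_isClosed A)).2

lemma scottCl_min (hAS : A ⊆ S) (h1 : IsLowerSet S) (h2 : DirSupClosed S) : scottCl A ⊆ S := by
  letI := Topology.scott L univ; exact closure_minimal hAS (scottClosed_iff.2 ⟨h1, h2⟩)

lemma wayBelow.le (h : wayBelow y x) : y ≤ x := by
  obtain ⟨d, hd, hyd⟩ := h {x} ⟨x, rfl⟩
    (fun a ha b hb => ⟨x, rfl, ha.le, le_of_eq hb⟩) x isLUB_singleton le_rfl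
  · exact (mem_up_singleton.1 hyd).trans hd.le
lemma weaklyWayBelow.le (h : weaklyWayBelow y x) : y ≤ x := by
  obtain ⟨d, hd, hyd⟩ := h {x} ⟨x, rfl⟩
    (fun a ha b hb => ⟨x, rfl, ha.le, le_of_eq hb⟩) isLUB_singleton
  exact (mem_up_singleton.1 hyd).trans hd.le

lemma wayBelow.mono_left (h : wayBelow y x) (hz : z ≤ y) : wayBelow z x := fun D hD hdir s hs hxs =>
  let ⟨d, hd, hyd⟩ := h D hD hdir s hs hxs
  ⟨d, hd, mem_up_singleton.2 (hz.trans (mem_up_singleton.1 hyd))⟩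

lemma wayBelow.mono_right (h : wayBelow y x) (hx : x ≤ z) : wayBelow y z :=
  fun D hD hdir s hs hxs => h D hD hdir s hs (hx.trans hxs)

lemma wayBelow.weaklyWayBelow (h : wayBelow y x) : weaklyWayBelow y x :=
  fun D hD hdir hs => h D hD hdir x hs le_rfl

lemma dw_subset_scottCl (A : Set L) : dw A ⊆ scottCl A :=
  fun _ ⟨a, ha, hxa⟩ => scottCl_isLowerSet A hxa (subset_scottCl A ha)

lemma oneStep_subset_scottCl (A : Set L) : oneStep A ⊆ scottCl A := by
  rintro x ⟨D, hDA, hD, hdir, hlub⟩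
  exact scottCl_dirSupClosed A (hDA.trans (dw_subset_scottCl A)) hD hdir hlub

lemma subset_oneStep (A : Set L) : A ⊆ oneStep A := fun a ha =>
  ⟨{a}, by simpa using subset_dw A ha, ⟨a, rfl⟩,
    fun b hb c hc => ⟨a, rfl, hb.le, le_of_eq hc⟩, isLUB_singleton⟩

end AuxLemmas

section Cont
variable {L : Type*} [Preorder L] {x y z : L} {A : Set L}

lemma interpolation (hc : ContinuousPoset L) (h : wayBelow y x) :
    ∃ z, wayBelow y z ∧ wayBelow z x := by
  set E : Set L := {w | ∃ z, wayBelow w z ∧ wayBelow z x} with hE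
  have hEne : E.Nonempty := by
    obtain ⟨z, hz⟩ := (hc x).1
    obtain ⟨w, hw⟩ := (hc z).1
    exact ⟨w, z, hw, hz⟩
  have hEdir : DirectedOn (· ≤ ·) E := by
    rintro w₁ ⟨z₁, hw₁, hz₁⟩ w₂ ⟨z₂, hw₂, hz₂⟩
    obtain ⟨z₃, hz₃, h13, h23⟩ := (hc x).2.1 z₁ hz₁ z₂ hz₂
    obtain ⟨w, hw, hw1, hw2⟩ := (hc z₃).2.1 w₁ (hw₁.mono_right h13) w₂ (hw₂.mono_right h23)
    exact ⟨w, ⟨z₃, hw, hz₃⟩, hw1, hw2⟩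
  have hElub : IsLUB E x := by
    constructor
    · rintro w ⟨z, hw, hz⟩; exact hw.le.trans hz.le
    · intro b hb
      refine (hc x).2.2.2 fun z hz => ?_
      exact (hc z).2.2.2 fun w hw => hb ⟨z, hw, hz⟩
  obtain ⟨w, hwE, hyw⟩ := h E hEne hEdir x hElub le_rfl
  obtain ⟨z, hwz, hzx⟩ := hwE
  exact ⟨z, hwz.mono_left (mem_up_singleton.1 hyw), hzx⟩

lemma scottCl_subset_oneStep (hc : ContinuousPoset L) (A : Set L) : scottCl A ⊆ oneStep A := by
  intro x hx
  set S : Set L := {x | ∀ y, wayBelow y x → y ∈ dw A} with hS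
  have hsub : scottCl A ⊆ S := by
    refine scottCl_min (fun a ha y hy => ⟨a, ha, hy.le⟩)
      (fun a b hba ha y hy => ha y (hy.mono_right hba)) ?_
    rintro d hds hd hdir s hs y hy
    obtain ⟨z, hyz, hzx⟩ := interpolation hc hy
    obtain ⟨d₀, hd₀, hzd₀⟩ := hzx d hd hdir s hs le_rfl
    exact hds hd₀ y (hyz.mono_right (mem_up_singleton.1 hzd₀))
  exact ⟨{y | wayBelow y x}, fun y hy => hsub hx y hy, (hc x).1, (hc x).2.1, (hc x).2.2⟩

lemma wwb_iff_wb_of_cont (hc : ContinuousPoset L) : weaklyWayBelow y x ↔ wayBelow y x := by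
  refine ⟨fun h D hD hdir s hs hxs => ?_, wayBelow.weaklyWayBelow⟩
  obtain ⟨z, hz, hyz⟩ := h {y | wayBelow y x} (hc x).1 (hc x).2.1 (hc x).2.2
  obtain ⟨d, hd, hzd⟩ := hz D hD hdir s hs hxs
  exact ⟨d, hd, mem_up_singleton.2 ((mem_up_singleton.1 hyz).trans (mem_up_singleton.1 hzd))⟩

lemma exact_of_cont (hc : ContinuousPoset L) : ExactPoset L := by
  intro x
  have : {y | weaklyWayBelow y x} = {y | wayBelow y x} :=
    Set.ext fun y => wwb_iff_wb_of_cont hc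
  rw [this]; exact hc x

lemma wwb_iff_wb_of_lower
    (h : ∀ D : Set L, D.Nonempty → DirectedOn (· ≤ ·) D → IsLowerSet (oneStep D)) :
    weaklyWayBelow y x ↔ wayBelow y x := by
  refine ⟨fun hw D hD hdir s hs hxs => ?_, wayBelow.weaklyWayBelow⟩
  have hsD : s ∈ oneStep D := ⟨D, subset_dw D, hD, hdir, hs⟩
  obtain ⟨E, hED, hEne, hEdir, hElub⟩ := h D hD hdir hxs hsD
  obtain ⟨e, heE, hye⟩ := hw E hEne hEdir hElub
  obtain ⟨d, hdD, hed⟩ := hED heE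
  exact ⟨d, hdD, mem_up_singleton.2 ((mem_up_singleton.1 hye).trans hed)⟩

end Cont


/-- For a poset `L`, the following are equivalent: (1) `L` is continuous; (2) `L` has
one-step closure and is exact; (3) `A'` is a lower set for every `A` and `L` is exact;
(4) `D'` is a lower set for every directed `D` and `L` is exact. -/
theorem continuous_tfae {L : Type*} [PartialOrder L] :
    [ContinuousPoset L,
     HasOneStepClosure L ∧ ExactPoset L,
     (∀ A : Set L, IsLowerSet (oneStep A)) ∧ ExactPoset L,
     (∀ D : Set L, D.Nonempty → DirectedOn (· ≤ ·) D → IsLowerSet (oneStep D)) ∧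
       ExactPoset L].TFAE := by
  tfae_have 1 → 2
  | hc => ⟨fun A => Subset.antisymm (scottCl_subset_oneStep hc A) (oneStep_subset_scottCl A),
      exact_of_cont hc⟩
  tfae_have 2 → 3
  | ⟨h1, h2⟩ => ⟨fun A => h1 A ▸ scottCl_isLowerSet A, h2⟩
  tfae_have 3 → 4
  | ⟨h1, h2⟩ => ⟨fun D _ _ => h1 D, h2⟩
  tfae_have 4 → 1
  | ⟨h, he⟩ => by
      intro x
      have hset : {y | wayBelow y x} = {y | weaklyWayBelow y x} :=
        Set.ext fun y => (wwb_iff_wb_of_lower h).symm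
      rw [hset]; exact he x
  tfae_finish
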